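/- Gradient interpolation estimate for a smooth strongly convex function. Let E be a real inner product space, μ ≥ 0, and let h : E → ℝ be differentiable with gradient ∇h and such that h − (μ/2)·‖·‖² is convex. Let τ ∈ [0,1], let a, x̃, x ∈ E, and set x̂ := (1−τ)·a + τ·x̃. Then h(x̂) + τ·⟨∇h(x̂), x − x̃⟩ ≤ (1−τ)·h(a) + τ·h(x) − (μ·τ²/2)·‖x̃ − x‖² − (μ·(1−τ)·τ/2)·‖a − x‖². -/

import Mathlib

open scoped RealInnerProductSpace


lemma convex_line_grad_le {E : Type*} [NormedAddCommGroup E] [InnerProductSpace ℝ E]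
    (g : E → ℝ) (hconv : ConvexOn ℝ Set.univ g) (z y : E) (d : ℝ)
    (hd : HasDerivAt (fun t : ℝ => g ((1 - t) • z + t • y)) d 0) : g z + d ≤ g y := by
  have hconv' : ConvexOn ℝ Set.univ (fun t : ℝ => g ((1 - t) • z + t • y)) := by
    have h1 := hconv.comp_affineMap (AffineMap.lineMap z y : ℝ →ᵃ[ℝ] E)
    have h2 : (g ∘ (AffineMap.lineMap z y : ℝ →ᵃ[ℝ] E)) = fun t : ℝ => g ((1 - t) • z + t • y) := by
      funext t; simp [Function.comp, AffineMap.lineMap_apply_module]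
    rw [h2] at h1
    simpa using h1
  have := hconv'.le_slope_of_hasDerivAt (Set.mem_univ 0) (Set.mem_univ 1) zero_lt_one hd
  simp [slope_def_field] at this
  linarith

lemma grad_line_deriv {E : Type*} [NormedAddCommGroup E] [InnerProductSpace ℝ E] [CompleteSpace E]
    (μ : ℝ) (h : E → ℝ) (h' : E → E) (hdiff : ∀ z, HasGradientAt h (h' z) z) (z y : E) :
    HasDerivAt (fun t : ℝ => h ((1 - t) • z + t • y) - μ / 2 * ‖(1 - t) • z + t • y‖ ^ 2)
      (⟪h' z, y - z⟫ - μ / 2 * (⟪z, y - z⟫ + ⟪y - z, z⟫)) 0 := by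
  have hL : HasDerivAt (fun t : ℝ => (1 - t) • z + t • y) (y - z) 0 := by
    have h1 : HasDerivAt (fun t : ℝ => (1 - t) • z) (-z) 0 := by
      simpa using ((hasDerivAt_id (0:ℝ)).const_sub 1).smul_const z
    have h2 : HasDerivAt (fun t : ℝ => t • y) y 0 := by
      simpa using (hasDerivAt_id (0:ℝ)).smul_const y
    simpa [sub_eq_neg_add, add_comm] using h1.fun_add h2
  have hL0 : (1 - (0:ℝ)) • z + (0:ℝ) • y = z := by simp
  have hh : HasDerivAt (fun t : ℝ => h ((1 - t) • z + t • y)) ⟪h' z, y - z⟫ 0 := by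
    have hf := hasGradientAt_iff_hasFDerivAt.mp (hdiff z)
    rw [← hL0] at hf
    simpa [Function.comp_def, InnerProductSpace.toDual_apply_apply] using hf.comp_hasDerivAt 0 hL
  have hn : HasDerivAt (fun t : ℝ => ‖(1 - t) • z + t • y‖ ^ 2)
      (⟪z, y - z⟫ + ⟪y - z, z⟫) 0 := by
    have := hL.inner ℝ hL
    rw [hL0] at this
    have heq : (fun t : ℝ => ‖(1 - t) • z + t • y‖ ^ 2)
        = fun t : ℝ => ⟪(1 - t) • z + t • y, (1 - t) • z + t • y⟫ := by
      funext t; rw [real_inner_self_eq_norm_sq]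
    rw [heq]
    exact this
  simpa using hh.fun_sub (hn.const_mul (μ / 2))
/-- Gradient interpolation estimate for a smooth strongly convex function. -/
theorem gradient_interpolation_estimate {E : Type*} [NormedAddCommGroup E]
    [InnerProductSpace ℝ E] [CompleteSpace E] (μ : ℝ) (hμ : 0 ≤ μ)
    (h : E → ℝ) (h' : E → E) (hdiff : ∀ z, HasGradientAt h (h' z) z)
    (hμconv : ConvexOn ℝ Set.univ (fun u => h u - μ / 2 * ‖u‖ ^ 2))
    (τ : ℝ) (hτ₀ : 0 ≤ τ) (hτ₁ : τ ≤ 1) (a xt x : E) (xhat : E)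
    (hxhat : xhat = (1 - τ) • a + τ • xt) :
    h xhat + τ * ⟪h' xhat, x - xt⟫
      ≤ (1 - τ) * h a + τ * h x - μ * τ ^ 2 / 2 * ‖xt - x‖ ^ 2
        - μ * (1 - τ) * τ / 2 * ‖a - x‖ ^ 2 := by
  have ka := convex_line_grad_le _ hμconv xhat a _ (grad_line_deriv μ h h' hdiff xhat a)
  have kx := convex_line_grad_le _ hμconv xhat x _ (grad_line_deriv μ h h' hdiff xhat x)
  have ka' := mul_le_mul_of_nonneg_left ka (by linarith : (0:ℝ) ≤ 1 - τ)
  have kx' := mul_le_mul_of_nonneg_left kx hτ₀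
  have hsum := add_le_add ka' kx'
  simp only [← real_inner_self_eq_norm_sq] at hsum ⊢
  subst hxhat
  simp only [inner_add_left, inner_add_right, inner_sub_left, inner_sub_right,
    inner_smul_left, inner_smul_right, RCLike.ofReal_real_eq_id, id_eq, conj_trivial,
    real_inner_comm xt a, real_inner_comm x a, real_inner_comm x xt] at hsum ⊢
  ring_nf at hsum ⊢
  linarith [hsum]
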